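/- Let P = (p_{ij}) be an n × n matrix with nonnegative real entries and all row sums equal to 1, and suppose P is irreducible in the sense that for every pair of indices i, j there exists an integer m ≥ 1 with (P^m)_{ij} > 0. Then there exists an integer k with 1 ≤ k ≤ n such that the set of complex eigenvalues of P of modulus one is exactly the set {e^{2πij/k} : j = 0, 1, …, k−1} of all k-th roots of unity, and each of these eigenvalues is a simple root of the characteristic polynomial of P (algebraic multiplicity one). Moreover, if k > 1, there is a partition of the index set {1, …, n} into k nonempty sets C₀, C₁, …, C_{k−1} such that whenever p_{ij} > 0 and i ∈ C_t, then j ∈ C_{t+1 (mod k)}. -/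

import Mathlib

open Matrix Polynomial in
section
namespace Stmt12Aux


variable {n : ℕ} {P : Matrix (Fin n) (Fin n) ℝ}

lemma pow_nonneg (hpos : ∀ i j, 0 ≤ P i j) : ∀ m i j, 0 ≤ (P ^ m) i j := by
  intro m
  induction m with
  | zero => intro i j; rw [pow_zero]; rcases eq_or_ne i j with h | h <;>
      simp [Matrix.one_apply, h]
  | succ m ih =>
    intro i j
    rw [pow_succ, Matrix.mul_apply]
    exact Finset.sum_nonneg fun l _ => mul_nonneg (ih i l) (hpos l j)

lemma pow_row (hpos : ∀ i j, 0 ≤ P i j) (hrow : ∀ i, ∑ j, P i j = 1) :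
    ∀ m i, ∑ j, (P ^ m) i j = 1 := by
  intro m
  induction m with
  | zero => intro i; simp [Matrix.one_apply]
  | succ m ih =>
    intro i
    rw [pow_succ]
    simp only [Matrix.mul_apply]
    rw [Finset.sum_comm]
    calc ∑ l, ∑ j, (P ^ m) i l * P l j = ∑ l, (P ^ m) i l * ∑ j, P l j := by
          simp [Finset.mul_sum]
      _ = 1 := by simp [hrow, ih]

lemma step_of_pow_pos (hpos : ∀ i j, 0 ≤ P i j) {m : ℕ} {i j : Fin n}
    (h : 0 < (P ^ (m + 1)) i j) : ∃ l, 0 < (P ^ m) i l ∧ 0 < P l j := by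
  rw [pow_succ, Matrix.mul_apply] at h
  by_contra hc
  push_neg at hc
  have : ∑ l, (P ^ m) i l * P l j ≤ 0 := by
    apply Finset.sum_nonpos
    intro l _
    rcases (pow_nonneg hpos m i l).lt_or_eq with h1 | h1
    · have h2 : P l j = 0 := le_antisymm (hc l h1) (hpos l j)
      rw [h2, mul_zero]
    · rw [← h1, zero_mul]
  linarith

lemma propagate (hpos : ∀ i j, 0 ≤ P i j) (S : Fin n → Prop)
    (h : ∀ i j, 0 < P i j → S i → S j) :
    ∀ m i j, 0 < (P ^ m) i j → S i → S j := by
  intro m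
  induction m with
  | zero =>
    intro i j hij hi
    rw [pow_zero] at hij
    rcases eq_or_ne i j with rfl | hne
    · exact hi
    · simp [Matrix.one_apply, hne] at hij
  | succ m ih =>
    intro i j hij hi
    obtain ⟨l, h1, h2⟩ := step_of_pow_pos hpos hij
    exact h l j h2 (ih i l h1 hi)

lemma propagate_eq (hpos : ∀ i j, 0 ≤ P i j) (f : Fin n → ℂ) (μ : ℂ)
    (h : ∀ i j, 0 < P i j → f j = μ * f i) :
    ∀ m i j, 0 < (P ^ m) i j → f j = μ ^ m * f i := by
  intro m
  induction m with
  | zero =>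
    intro i j hij
    rw [pow_zero] at hij
    rcases eq_or_ne i j with rfl | hne
    · simp
    · simp [Matrix.one_apply, hne] at hij
  | succ m ih =>
    intro i j hij
    obtain ⟨l, h1, h2⟩ := step_of_pow_pos hpos hij
    rw [h l j h2, ih i l h1, ← mul_assoc, ← pow_succ']




lemma charpoly_eval (Q : Matrix (Fin n) (Fin n) ℂ) (t : ℂ) :
    Q.charpoly.eval t = (Matrix.scalar (Fin n) t - Q).det := by
  rw [Matrix.charpoly, _root_.eval_det, matPolyEquiv_charmatrix]
  simp

lemma scalar_mulVec (t : ℂ) (v : Fin n → ℂ) :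
    (Matrix.scalar (Fin n) t).mulVec v = t • v := by
  ext i
  simp [Matrix.scalar_apply, Matrix.mulVec_diagonal]

lemma isRoot_charpoly_iff (Q : Matrix (Fin n) (Fin n) ℂ) (μ : ℂ) :
    Q.charpoly.IsRoot μ ↔ ∃ v, v ≠ 0 ∧ Q.mulVec v = μ • v := by
  rw [Polynomial.IsRoot.def, charpoly_eval, ← Matrix.exists_mulVec_eq_zero_iff]
  constructor
  · rintro ⟨v, hv, h⟩
    refine ⟨v, hv, ?_⟩
    rw [Matrix.sub_mulVec, scalar_mulVec, sub_eq_zero] at h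
    exact h.symm
  · rintro ⟨v, hv, h⟩
    refine ⟨v, hv, ?_⟩
    rw [Matrix.sub_mulVec, scalar_mulVec, sub_eq_zero, h]




lemma rigid (hpos : ∀ i j, 0 ≤ P i j) (hrow : ∀ i, ∑ j, P i j = 1)
    (hirr : ∀ i j, ∃ m : ℕ, 1 ≤ m ∧ 0 < (P ^ m) i j)
    {μ : ℂ} (hμ : ‖μ‖ = 1) {v : Fin n → ℂ} (hv : v ≠ 0)
    (heig : (P.map (fun r : ℝ => (r : ℂ))).mulVec v = μ • v) :
    (∀ i j, 0 < P i j → v j = μ * v i) ∧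
    ∃ w : Fin n → ℂ, (∀ i, ‖w i‖ = 1) ∧
      (P.map (fun r : ℝ => (r : ℂ))).mulVec w = μ • w ∧
      (∀ i j, 0 < P i j → w j = μ * w i) := by
  set Q := P.map (fun r : ℝ => (r : ℂ)) with hQdef
  have hQ : ∀ i j, Q i j = ((P i j : ℝ) : ℂ) := fun i j => rfl
  set u : Fin n → ℝ := fun i => ‖v i‖ with hu
  have hsum : ∀ i, ∑ l, Q i l * v l = μ * v i := by
    intro i
    have := congrFun heig i
    simpa [Matrix.mulVec, dotProduct] using this
  have hsub : ∀ i, u i ≤ ∑ j, P i j * u j := by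
    intro i
    have h1 : u i = ‖μ * v i‖ := by
      rw [norm_mul, hμ, one_mul]
    rw [h1, ← hsum i]
    calc ‖∑ l, Q i l * v l‖ ≤ ∑ l, ‖Q i l * v l‖ := norm_sum_le _ _
      _ = ∑ l, P i l * u l := by
        apply Finset.sum_congr rfl
        intro l _
        rw [norm_mul, hQ, Complex.norm_real, Real.norm_eq_abs, abs_of_nonneg (hpos i l)]
  -- the index set is nonempty since v ≠ 0
  obtain ⟨i₁, hi₁⟩ : ∃ i, v i ≠ 0 := Function.ne_iff.mp hv
  obtain ⟨i₀, -, hi₀⟩ := Finset.exists_max_image Finset.univ u ⟨i₁, Finset.mem_univ i₁⟩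
  set M : ℝ := u i₀ with hM
  have hMle : ∀ i, u i ≤ M := fun i => hi₀ i (Finset.mem_univ i)
  have hMpos : 0 < M := lt_of_lt_of_le (norm_pos_iff.mpr hi₁) (hMle i₁)
  -- maximality propagates
  have hstep : ∀ i, u i = M → ∀ j, 0 < P i j → u j = M := by
    intro i hiM j hij
    have h1 : ∑ l, P i l * u l ≤ ∑ l, P i l * M := by
      apply Finset.sum_le_sum
      intro l _
      exact mul_le_mul_of_nonneg_left (hMle l) (hpos i l)
    have h2 : ∑ l, P i l * M = M := by
      rw [← Finset.sum_mul, hrow, one_mul]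
    have h3 : ∑ l, P i l * u l = ∑ l, P i l * M := by
      have := hsub i
      rw [hiM] at this
      linarith [h1, h2, this]
    have h4 : ∑ l, P i l * (M - u l) = 0 := by
      have : ∑ l, (P i l * M - P i l * u l) = 0 := by
        rw [Finset.sum_sub_distrib, h3]; ring
      simpa [mul_sub] using this
    have h5 := (Finset.sum_eq_zero_iff_of_nonneg ?_).mp h4 j (Finset.mem_univ j)
    · rcases mul_eq_zero.mp h5 with h | h
      · exact absurd h (ne_of_gt hij)
      · linarith
    · intro l _
      exact mul_nonneg (hpos i l) (by linarith [hMle l])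
  have hall : ∀ j, u j = M := by
    intro j
    obtain ⟨m, -, hm⟩ := hirr i₀ j
    exact propagate hpos (fun i => u i = M) (fun i j h hi => hstep i hi j h) m i₀ j hm rfl
  -- equality in triangle inequality
  have key : ∀ i j, 0 < P i j → v j = μ * v i := by
    intro i j hij
    set c : ℂ := (starRingEnd ℂ) (μ * v i) with hc
    have hnc : ‖c‖ = M := by
      rw [hc, RCLike.norm_conj, norm_mul, hμ, one_mul]; exact hall i
    have hcvi : c * (μ * v i) = ((M ^ 2 : ℝ) : ℂ) := by
      rw [hc, ← Complex.normSq_eq_conj_mul_self]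
      norm_cast
      rw [← Complex.sq_norm, norm_mul, hμ, one_mul]
      exact congrArg (· ^ 2) (hall i)
    have h2 : ∑ l, P i l * (c * v l).re = M ^ 2 := by
      have : c * ∑ l, Q i l * v l = ((M ^ 2 : ℝ) : ℂ) := by rw [hsum i, hcvi]
      have hre := congrArg Complex.re this
      rw [Finset.mul_sum, Complex.ofReal_re] at hre
      rw [← hre, Complex.re_sum]
      apply Finset.sum_congr rfl
      intro l _
      have : c * (Q i l * v l) = ((P i l : ℝ) : ℂ) * (c * v l) := by
        rw [hQ]; ring
      rw [this, Complex.re_ofReal_mul]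
    have h3 : ∀ l, (c * v l).re ≤ M ^ 2 := by
      intro l
      calc (c * v l).re ≤ ‖c * v l‖ := Complex.re_le_norm _
        _ = M ^ 2 := by rw [norm_mul, hnc, show ‖v l‖ = M from hall l]; ring
    have h4 : ∑ l, P i l * (M ^ 2 - (c * v l).re) = 0 := by
      have : ∑ l, P i l * M ^ 2 = M ^ 2 := by rw [← Finset.sum_mul, hrow, one_mul]
      rw [Finset.sum_congr rfl (fun l _ => mul_sub (P i l) (M ^ 2) ((c * v l).re)),
        Finset.sum_sub_distrib, this, h2, sub_self]
    have h5 := (Finset.sum_eq_zero_iff_of_nonneg ?_).mp h4 j (Finset.mem_univ j)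
    · have h6 : (c * v j).re = M ^ 2 := by
        rcases mul_eq_zero.mp h5 with h | h
        · exact absurd h (ne_of_gt hij)
        · linarith
      have h7 : ‖c * v j‖ = M ^ 2 := by rw [norm_mul, hnc, show ‖v j‖ = M from hall j]; ring
      have h8 : (c * v j).im = 0 := by
        have := Complex.sq_norm (c * v j)
        rw [h7] at this
        rw [Complex.normSq_apply, h6] at this
        nlinarith
      have h9 : c * v j = ((M ^ 2 : ℝ) : ℂ) := by
        apply Complex.ext
        · rw [h6]; exact (Complex.ofReal_re _).symm
        · rw [h8]; exact (Complex.ofReal_im _).symm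
      have hc0 : c ≠ 0 := by
        intro h
        rw [h, norm_zero] at hnc
        linarith
      exact mul_left_cancel₀ hc0 (by rw [h9, hcvi])
    · intro l _
      exact mul_nonneg (hpos i l) (by linarith [h3 l])
  refine ⟨key, fun i => ((M : ℝ) : ℂ)⁻¹ * v i, ?_, ?_, ?_⟩
  · intro i
    rw [norm_mul, norm_inv, Complex.norm_real, Real.norm_eq_abs, abs_of_pos hMpos]
    rw [show ‖v i‖ = M from hall i]
    field_simp
  · have : (fun i => ((M : ℝ) : ℂ)⁻¹ * v i) = ((M : ℝ) : ℂ)⁻¹ • v := rfl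
    rw [this, Matrix.mulVec_smul, heig, smul_comm]
  · intro i j hij
    show ((M : ℝ) : ℂ)⁻¹ * v j = μ * (((M : ℝ) : ℂ)⁻¹ * v i)
    rw [key i j hij]; ring





lemma charpoly_comp_shift (Q : Matrix (Fin n) (Fin n) ℂ) (μ : ℂ) :
    Q.charpoly.comp (X + C μ) = (Q - μ • 1).charpoly := by
  let ψ : ℂ[X] →+* ℂ[X] := eval₂RingHom Polynomial.C (X + C μ)
  have hψ : Q.charpoly.comp (X + C μ) = ψ Q.charpoly := rfl
  rw [hψ, Matrix.charpoly, Matrix.charpoly, RingHom.map_det]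
  congr 1
  apply Matrix.ext
  intro i j
  rcases eq_or_ne i j with rfl | h
  · rw [RingHom.mapMatrix_apply, Matrix.map_apply, charmatrix_apply_eq, charmatrix_apply_eq]
    have h1 : (Q - μ • 1) i i = Q i i - μ := by
      simp [Matrix.sub_apply, Matrix.smul_apply, Matrix.one_apply_eq]
    rw [h1]
    simp only [ψ, coe_eval₂RingHom, eval₂_sub, eval₂_X, eval₂_C, map_sub]
    ring
  · rw [RingHom.mapMatrix_apply, Matrix.map_apply, charmatrix_apply_ne _ _ _ h,
      charmatrix_apply_ne _ _ _ h]
    have h1 : (Q - μ • 1) i j = Q i j := by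
      simp [Matrix.sub_apply, Matrix.smul_apply, Matrix.one_apply_ne h]
    rw [h1]
    simp [ψ]

lemma hQpow (m : ℕ) : (P.map (fun r : ℝ => (r : ℂ))) ^ m
    = (P ^ m).map (fun r : ℝ => (r : ℂ)) := by
  have h1 : P.map (fun r : ℝ => (r : ℂ)) = Complex.ofRealHom.mapMatrix P := rfl
  rw [h1, ← map_pow]
  rfl

lemma mult_one (hn : 0 < n) (hpos : ∀ i j, 0 ≤ P i j) (hrow : ∀ i, ∑ j, P i j = 1)
    (hirr : ∀ i j, ∃ m : ℕ, 1 ≤ m ∧ 0 < (P ^ m) i j)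
    {μ : ℂ} (hμ : ‖μ‖ = 1) {w : Fin n → ℂ} (hw1 : ∀ i, ‖w i‖ = 1)
    (heig : (P.map (fun r : ℝ => (r : ℂ))).mulVec w = μ • w)
    (hrel : ∀ i j, 0 < P i j → w j = μ * w i) :
    (P.map (fun r : ℝ => (r : ℂ))).charpoly.rootMultiplicity μ = 1 := by
  classical
  set Q := P.map (fun r : ℝ => (r : ℂ)) with hQdef
  have hμ0 : μ ≠ 0 := by intro h; rw [h, norm_zero] at hμ; norm_num at hμ
  have hμconj : μ * (starRingEnd ℂ) μ = 1 := by
    rw [Complex.mul_conj]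
    norm_cast
    rw [Complex.normSq_eq_norm_sq, hμ]; norm_num
  set b := Pi.basisFun ℂ (Fin n) with hb
  set A := Q - μ • 1 with hA
  set φ : Module.End ℂ (Fin n → ℂ) := Matrix.toLin b b A with hφdef
  have hφ : ∀ x, φ x = Q.mulVec x - μ • x := by
    intro x
    rw [hφdef, hb, Matrix.toLin_eq_toLin', Matrix.toLin'_apply, hA, Matrix.sub_mulVec,
      Matrix.smul_mulVec, Matrix.one_mulVec]
  have i₀ : Fin n := ⟨0, hn⟩
  have hw0 : w ≠ 0 := by
    intro h
    have := hw1 i₀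
    rw [h] at this
    simp at this
  -- kernel of φ is the span of w
  have hker : ∀ x : Fin n → ℂ, φ x = 0 → ∃ c : ℂ, x = c • w := by
    intro x hx
    rcases eq_or_ne x 0 with rfl | hx0
    · exact ⟨0, by simp⟩
    have heigx : Q.mulVec x = μ • x := by
      have := hφ x
      rw [hx] at this
      exact sub_eq_zero.mp this.symm
    have hrelx := (rigid hpos hrow hirr hμ hx0 heigx).1
    set g : Fin n → ℂ := fun i => x i * (starRingEnd ℂ) (w i) with hg
    have hgrel : ∀ i j, 0 < P i j → g j = 1 * g i := by
      intro i j hij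
      rw [hg]
      simp only
      rw [hrelx i j hij, hrel i j hij]
      have hconj : (starRingEnd ℂ) (μ * w i) = (starRingEnd ℂ) μ * (starRingEnd ℂ) (w i) := by
        exact _root_.map_mul _ _ _
      rw [hconj, one_mul]
      calc μ * x i * ((starRingEnd ℂ) μ * (starRingEnd ℂ) (w i))
          = (μ * (starRingEnd ℂ) μ) * (x i * (starRingEnd ℂ) (w i)) := by ring
        _ = x i * (starRingEnd ℂ) (w i) := by rw [hμconj, one_mul]
    have hgconst : ∀ i, g i = g i₀ := by
      intro i
      obtain ⟨m, -, hm⟩ := hirr i₀ i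
      rw [propagate_eq hpos g 1 hgrel m i₀ i hm, one_pow, one_mul]
    refine ⟨g i₀, ?_⟩
    funext i
    have hwc : (starRingEnd ℂ) (w i) * w i = 1 := by
      rw [mul_comm, Complex.mul_conj]
      norm_cast
      rw [Complex.normSq_eq_norm_sq, hw1 i]; norm_num
    calc x i = x i * ((starRingEnd ℂ) (w i) * w i) := by rw [hwc, mul_one]
      _ = g i * w i := by rw [hg]; ring
      _ = (g i₀ • w) i := by rw [hgconst i]; simp
  -- no generalized eigenvectors
  have hker2 : ∀ x : Fin n → ℂ, φ (φ x) = 0 → φ x = 0 := by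
    intro x hx
    obtain ⟨c, hc⟩ := hker (φ x) hx
    suffices hcz : c = 0 by rw [hc, hcz, zero_smul]
    by_contra hc0
    set d := c / μ with hd
    have hd0 : d ≠ 0 := div_ne_zero hc0 hμ0
    have hQx : ∀ i, (Q.mulVec x) i = μ * x i + c * w i := by
      intro i
      have h1 := congrFun (hφ x) i
      have h2 := congrFun hc i
      simp only [Pi.sub_apply, Pi.smul_apply, smul_eq_mul] at h1 h2
      linear_combination h2 - h1
    have hQw : ∀ i, (Q.mulVec w) i = μ * w i := by
      intro i
      have := congrFun heig i
      simpa using this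
    have E : ∀ (m : ℕ) (i : Fin n), ((Q ^ m).mulVec x) i = μ ^ m * ((m : ℂ) * d * w i + x i) := by
      intro m
      induction m with
      | zero => intro i; simp
      | succ m ih =>
        intro i
        have hstep : ((Q ^ (m + 1)).mulVec x) i = (Q.mulVec ((Q ^ m).mulVec x)) i := by
          rw [Matrix.mulVec_mulVec, ← pow_succ']
        rw [hstep]
        have : Q.mulVec ((Q ^ m).mulVec x) i = ∑ l, Q i l * (((Q ^ m).mulVec x) l) := by
          simp [Matrix.mulVec, dotProduct]
        rw [this]
        have hsplit : ∀ l, Q i l * (((Q ^ m).mulVec x) l)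
            = (μ ^ m * ((m : ℂ) * d)) * (Q i l * w l) + μ ^ m * (Q i l * x l) := by
          intro l
          rw [ih l]; ring
        rw [Finset.sum_congr rfl fun l _ => hsplit l, Finset.sum_add_distrib,
          ← Finset.mul_sum, ← Finset.mul_sum]
        have hx' : ∑ l, Q i l * x l = μ * x i + c * w i := by
          rw [← hQx i]; simp [Matrix.mulVec, dotProduct]
        have hw' : ∑ l, Q i l * w l = μ * w i := by
          rw [← hQw i]; simp [Matrix.mulVec, dotProduct]
        rw [hx', hw']
        have hcd : c = μ * d := by rw [hd]; field_simp
        rw [hcd]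
        push_cast
        ring
    -- bound on entries of (Q ^ m).mulVec x
    obtain ⟨i₂, -, hi₂⟩ := Finset.exists_max_image Finset.univ (fun i => ‖x i‖)
      ⟨i₀, Finset.mem_univ i₀⟩
    set W := ‖x i₂‖ with hW
    have hbound : ∀ m, ‖((Q ^ m).mulVec x) i₀‖ ≤ W := by
      intro m
      have h1 : ((Q ^ m).mulVec x) i₀ = ∑ l, ((P ^ m) i₀ l : ℂ) * x l := by
        rw [hQdef, hQpow m]
        simp [Matrix.mulVec, dotProduct]
      rw [h1]
      calc ‖∑ l, ((P ^ m) i₀ l : ℂ) * x l‖ ≤ ∑ l, ‖((P ^ m) i₀ l : ℂ) * x l‖ :=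
            norm_sum_le _ _
        _ = ∑ l, (P ^ m) i₀ l * ‖x l‖ := by
            apply Finset.sum_congr rfl
            intro l _
            rw [norm_mul, Complex.norm_real, Real.norm_eq_abs,
              abs_of_nonneg (pow_nonneg hpos m i₀ l)]
        _ ≤ ∑ l, (P ^ m) i₀ l * W := by
            apply Finset.sum_le_sum
            intro l _
            exact mul_le_mul_of_nonneg_left (hi₂ l (Finset.mem_univ l))
              (pow_nonneg hpos m i₀ l)
        _ = W := by rw [← Finset.sum_mul, pow_row hpos hrow, one_mul]
    obtain ⟨m, hm⟩ := exists_nat_gt ((W + ‖x i₀‖) / ‖d‖)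
    have hdpos : 0 < ‖d‖ := norm_pos_iff.mpr hd0
    have hm2 : W + ‖x i₀‖ < (m : ℝ) * ‖d‖ := by
      rw [div_lt_iff₀ hdpos] at hm
      linarith
    have hlow : (m : ℝ) * ‖d‖ - ‖x i₀‖ ≤ ‖((Q ^ m).mulVec x) i₀‖ := by
      rw [E m i₀, norm_mul, norm_pow, hμ, one_pow, one_mul]
      have h1 : ‖(m : ℂ) * d * w i₀‖ = (m : ℝ) * ‖d‖ := by
        rw [norm_mul, norm_mul, hw1 i₀, mul_one, Complex.norm_natCast]
      have h2 : ‖(m : ℂ) * d * w i₀‖ ≤ ‖(m : ℂ) * d * w i₀ + x i₀‖ + ‖x i₀‖ := by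
        calc ‖(m : ℂ) * d * w i₀‖ = ‖((m : ℂ) * d * w i₀ + x i₀) + (-(x i₀))‖ := by
              congr 1; ring
          _ ≤ ‖(m : ℂ) * d * w i₀ + x i₀‖ + ‖-(x i₀)‖ := norm_add_le _ _
          _ = ‖(m : ℂ) * d * w i₀ + x i₀‖ + ‖x i₀‖ := by rw [norm_neg]
      linarith [h1 ▸ h2]
    linarith [hbound m, hlow, hm2]
  -- kernels of all powers coincide
  have hkerpow : ∀ (k : ℕ) (x : Fin n → ℂ), (φ ^ k) x = 0 → φ x = 0 := by
    intro k
    induction k with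
    | zero => intro x hx; simp only [pow_zero, Module.End.one_apply] at hx; rw [hx, map_zero]
    | succ k ih =>
      intro x hx
      rw [pow_succ, Module.End.mul_apply] at hx
      exact hker2 x (ih (φ x) hx)
  have hφw : φ w = 0 := by
    rw [hφ w, heig, sub_self]
  have hspan : φ.maxGenEigenspace 0 = Submodule.span ℂ {w} := by
    apply le_antisymm
    · intro x hx
      rw [Module.End.mem_maxGenEigenspace] at hx
      obtain ⟨k, hk⟩ := hx
      rw [zero_smul, sub_zero] at hk
      obtain ⟨c, hc⟩ := hker x (hkerpow k x hk)
      rw [hc]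
      exact Submodule.smul_mem _ c (Submodule.mem_span_singleton_self w)
    · rw [Submodule.span_le, Set.singleton_subset_iff]
      rw [SetLike.mem_coe, Module.End.mem_maxGenEigenspace]
      exact ⟨1, by rw [zero_smul, sub_zero, pow_one, hφw]⟩
  have hchar : A.charpoly = φ.charpoly := by
    rw [hφdef, ← LinearMap.charpoly_toMatrix (Matrix.toLin b b A) b,
      LinearMap.toMatrix_toLin]
  rw [Polynomial.rootMultiplicity_eq_natTrailingDegree, charpoly_comp_shift, ← hA, hchar,
    ← LinearMap.finrank_maxGenEigenspace_zero_eq, hspan]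
  exact finrank_span_singleton hw0





lemma eigen_of_rel (hpos : ∀ i j, 0 ≤ P i j) (hrow : ∀ i, ∑ j, P i j = 1)
    (u : Fin n → ℂ) (μ : ℂ) (hrel : ∀ i j, 0 < P i j → u j = μ * u i) :
    (P.map (fun r : ℝ => (r : ℂ))).mulVec u = μ • u := by
  funext i
  have h1 : ∀ l, (P.map (fun r : ℝ => (r : ℂ))) i l * u l
      = (P.map (fun r : ℝ => (r : ℂ))) i l * (μ * u i) := by
    intro l
    rcases (hpos i l).lt_or_eq with h | h
    · rw [hrel i l h]
    · have : (P.map (fun r : ℝ => (r : ℂ))) i l = 0 := by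
        simp [Matrix.map_apply, ← h]
      rw [this, zero_mul, zero_mul]
  have h2 : ∑ l, (P.map (fun r : ℝ => (r : ℂ))) i l = 1 := by
    have : ∑ l, ((P i l : ℝ) : ℂ) = ((∑ l, P i l : ℝ) : ℂ) := by push_cast; ring
    simp only [Matrix.map_apply]
    rw [this, hrow, Complex.ofReal_one]
  calc ((P.map (fun r : ℝ => (r : ℂ))).mulVec u) i
      = ∑ l, (P.map (fun r : ℝ => (r : ℂ))) i l * u l := by
        simp [Matrix.mulVec, dotProduct]
    _ = ∑ l, (P.map (fun r : ℝ => (r : ℂ))) i l * (μ * u i) := Finset.sum_congr rfl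
        fun l _ => h1 l
    _ = (∑ l, (P.map (fun r : ℝ => (r : ℂ))) i l) * (μ * u i) := by
        rw [Finset.sum_mul]
    _ = μ * u i := by rw [h2, one_mul]
    _ = (μ • u) i := by simp

theorem stmt12' (hn : 0 < n)
    (hpos : ∀ i j, 0 ≤ P i j)
    (hrow : ∀ i, ∑ j, P i j = 1)
    (hirr : ∀ i j, ∃ m : ℕ, 1 ≤ m ∧ 0 < (P ^ m) i j) :
    ∃ k : ℕ, 1 ≤ k ∧ k ≤ n ∧
      {lam : ℂ | ‖lam‖ = 1 ∧
          (P.map (fun r : ℝ => (r : ℂ))).charpoly.IsRoot lam}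
        = {lam : ℂ | lam ^ k = 1} ∧
      (∀ lam : ℂ, lam ^ k = 1 →
        (P.map (fun r : ℝ => (r : ℂ))).charpoly.rootMultiplicity lam = 1) ∧
      (1 < k → ∃ C : Fin n → ZMod k,
        Function.Surjective C ∧
        ∀ i j, 0 < P i j → C j = C i + 1) := by
  classical
  set Q := P.map (fun r : ℝ => (r : ℂ)) with hQdef
  set q := Q.charpoly with hq
  set S : Set ℂ := {lam : ℂ | ‖lam‖ = 1 ∧ q.IsRoot lam} with hS
  have i₀ : Fin n := ⟨0, hn⟩
  have hqmonic : q.Monic := Q.charpoly_monic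
  have hq0 : q ≠ 0 := hqmonic.ne_zero
  -- rigid eigenvectors for elements of S
  have hrigid : ∀ z ∈ S, ∃ w : Fin n → ℂ, (∀ i, ‖w i‖ = 1) ∧
      Q.mulVec w = z • w ∧ (∀ i j, 0 < P i j → w j = z * w i) := by
    rintro z ⟨hz1, hz2⟩
    obtain ⟨v, hv0, hveig⟩ := (isRoot_charpoly_iff Q z).mp hz2
    exact (rigid hpos hrow hirr hz1 hv0 hveig).2
  -- membership from a unit-norm rigid vector
  have hmem : ∀ (z : ℂ), ‖z‖ = 1 → ∀ w : Fin n → ℂ, (∀ i, ‖w i‖ = 1) →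
      (∀ i j, 0 < P i j → w j = z * w i) → z ∈ S := by
    intro z hz w hw1 hrel
    refine ⟨hz, (isRoot_charpoly_iff Q z).mpr ⟨w, ?_, eigen_of_rel hpos hrow w z hrel⟩⟩
    intro h
    have := hw1 i₀
    rw [h] at this
    simp at this
  have hSunit : ∀ z ∈ S, z ≠ 0 := by
    intro z hz h
    have h1 := hz.1
    rw [h, norm_zero] at h1
    exact one_ne_zero h1.symm
  have hS1 : (1 : ℂ) ∈ S := by
    refine hmem 1 (by norm_num) (fun _ => 1) (fun i => by norm_num) ?_
    intro i j _; norm_num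
  have hSmul : ∀ z₁ ∈ S, ∀ z₂ ∈ S, z₁ * z₂ ∈ S := by
    intro z₁ hz₁ z₂ hz₂
    obtain ⟨w₁, hw₁1, -, hw₁r⟩ := hrigid z₁ hz₁
    obtain ⟨w₂, hw₂1, -, hw₂r⟩ := hrigid z₂ hz₂
    refine hmem (z₁ * z₂) (by rw [norm_mul, hz₁.1, hz₂.1, one_mul]) (fun i => w₁ i * w₂ i)
      (fun i => by rw [norm_mul, hw₁1 i, hw₂1 i, one_mul]) ?_
    intro i j hij
    show w₁ j * w₂ j = z₁ * z₂ * (w₁ i * w₂ i)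
    rw [hw₁r i j hij, hw₂r i j hij]; ring
  have hSinv : ∀ z ∈ S, z⁻¹ ∈ S := by
    intro z hz
    obtain ⟨w, hw1, -, hwr⟩ := hrigid z hz
    have hzinv : z⁻¹ = (starRingEnd ℂ) z := by
      have h1 : z * (starRingEnd ℂ) z = 1 := by
        rw [Complex.mul_conj]
        norm_cast
        rw [Complex.normSq_eq_norm_sq, hz.1]; norm_num
      exact inv_eq_of_mul_eq_one_right h1
    rw [hzinv]
    refine hmem _ (by rw [RCLike.norm_conj, hz.1]) (fun i => (starRingEnd ℂ) (w i))
      (fun i => by rw [RCLike.norm_conj, hw1 i]) ?_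
    intro i j hij
    show (starRingEnd ℂ) (w j) = (starRingEnd ℂ) z * (starRingEnd ℂ) (w i)
    rw [hwr i j hij]
    exact _root_.map_mul _ _ _
  -- the subgroup of ℂˣ corresponding to S
  set G : Subgroup ℂˣ :=
    { carrier := {x : ℂˣ | ((x : ℂˣ) : ℂ) ∈ S}
      one_mem' := by simpa using hS1
      mul_mem' := fun {a b} ha hb => by
        simpa using hSmul _ ha _ hb
      inv_mem' := fun {a} ha => by
        have : ((a⁻¹ : ℂˣ) : ℂ) = ((a : ℂ))⁻¹ := by simp
        simpa [this] using hSinv _ ha } with hG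
  have hmemG : ∀ x : ℂˣ, x ∈ G ↔ ((x : ℂˣ) : ℂ) ∈ S := fun x => Iff.rfl
  -- S is finite
  have hSfin : S.Finite := by
    apply Set.Finite.subset (q.roots.toFinset : Finset ℂ).finite_toSet
    intro z hz
    simp only [Finset.coe_sort_coe, Multiset.mem_toFinset, Finset.mem_coe]
    rw [Polynomial.mem_roots hq0]
    exact hz.2
  haveI hSsub' : Finite ↥S := hSfin.to_subtype
  have hGfin : Finite ↥G := by
    apply Finite.of_injective (fun g : ↥G => (⟨((g : ℂˣ) : ℂ), g.2⟩ : ↥S))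
    intro g₁ g₂ h
    exact Subtype.ext (Units.ext (congrArg Subtype.val h))
  set k := Nat.card ↥G with hk
  have hkpos : 1 ≤ k := Nat.one_le_iff_ne_zero.mpr (Nat.card_ne_zero.mpr ⟨⟨1, one_mem G⟩, hGfin⟩)
  haveI : NeZero k := ⟨by omega⟩
  -- S in bijection with G
  have e : ↥G ≃ ↥S :=
    { toFun := fun g => ⟨((g : ℂˣ) : ℂ), g.2⟩
      invFun := fun z => ⟨Units.mk0 z.1 (hSunit z.1 z.2), by
        rw [hmemG]; exact z.2⟩
      left_inv := fun g => by
        ext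
        simp
      right_inv := fun z => rfl }
  have hScard : hSfin.toFinset.card = k := by
    rw [← Set.ncard_eq_toFinset_card _ hSfin, ← Nat.card_coe_set_eq, Nat.card_congr e.symm]
  -- every element of S is a k-th root of unity
  have hSsub : ∀ z ∈ S, z ^ k = 1 := by
    intro z hz
    have h1 : (⟨Units.mk0 z (hSunit z hz), by rw [hmemG]; exact hz⟩ : ↥G) ^ k = 1 :=
      pow_card_eq_one'
    have h2 := congrArg (fun x : ↥G => ((x : ℂˣ) : ℂ)) h1
    simpa using h2
  -- S equals the set of k-th roots of unity
  have hprim : IsPrimitiveRoot (Complex.exp (2 * Real.pi * Complex.I / k)) k :=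
    Complex.isPrimitiveRoot_exp k (by omega)
  have hcardroots : (Polynomial.nthRootsFinset k (1 : ℂ)).card = k := hprim.card_nthRootsFinset
  have hfineq : hSfin.toFinset = Polynomial.nthRootsFinset k (1 : ℂ) := by
    apply Finset.eq_of_subset_of_card_le
    · intro z hz
      rw [Set.Finite.mem_toFinset] at hz
      rw [Polynomial.mem_nthRootsFinset (by omega)]
      exact hSsub z hz
    · rw [hcardroots, hScard]
  have hSeq : S = {lam : ℂ | lam ^ k = 1} := by
    ext z
    constructor
    · intro hz; exact hSsub z hz
    · intro hz
      have : z ∈ Polynomial.nthRootsFinset k (1 : ℂ) := by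
        rw [Polynomial.mem_nthRootsFinset (by omega)]
        exact hz
      rw [← hfineq, Set.Finite.mem_toFinset] at this
      exact this
  -- k ≤ n
  have hkn : k ≤ n := by
    have h1 : hSfin.toFinset ⊆ q.roots.toFinset := by
      intro z hz
      rw [Set.Finite.mem_toFinset] at hz
      rw [Multiset.mem_toFinset, Polynomial.mem_roots hq0]
      exact hz.2
    have h2 : hSfin.toFinset.card ≤ q.roots.toFinset.card := Finset.card_le_card h1
    have h3 : q.roots.toFinset.card ≤ Multiset.card q.roots := Multiset.toFinset_card_le _
    have h4 : Multiset.card q.roots ≤ q.natDegree := Polynomial.card_roots' q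
    have h5 : q.natDegree = n := by
      rw [hq, Matrix.charpoly_natDegree_eq_dim, Fintype.card_fin]
    have h6 := hScard
    omega
  refine ⟨k, hkpos, hkn, hSeq, ?_, ?_⟩
  · intro lam hlam
    have hlamS : lam ∈ S := by rw [hSeq]; exact hlam
    obtain ⟨w, hw1, hweig, hwrel⟩ := hrigid lam hlamS
    exact mult_one hn hpos hrow hirr hlamS.1 hw1 hweig hwrel
  · intro hk1
    obtain ⟨g, hg⟩ := IsCyclic.exists_generator (α := ↥G)
    have hord : orderOf g = k := orderOf_eq_card_of_forall_mem_zpowers hg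
    set ζ : ℂ := ((g : ℂˣ) : ℂ) with hζ
    have hζS : ζ ∈ S := g.2
    have hcoe : ∀ a : ℕ, (((g ^ a : ↥G) : ℂˣ) : ℂ) = ζ ^ a := by
      intro a
      rw [SubmonoidClass.coe_pow, Units.val_pow_eq_pow_val]
    have hζpow : ∀ a b : ℕ, ζ ^ a = ζ ^ b ↔ (a : ZMod k) = (b : ZMod k) := by
      intro a b
      rw [ZMod.natCast_eq_natCast_iff, ← hord, ← pow_eq_pow_iff_modEq]
      constructor
      · intro h
        exact Subtype.ext (Units.ext ((hcoe a).trans (h.trans (hcoe b).symm)))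
      · intro h
        rw [← hcoe a, ← hcoe b, h]
    obtain ⟨w, hw1, -, hwrel⟩ := hrigid ζ hζS
    have hwne : ∀ i, w i ≠ 0 := by
      intro i h
      have := hw1 i
      rw [h] at this
      simp at this
    have hreach : ∀ i, ∃ m : ℕ, w i = ζ ^ m * w i₀ := by
      intro i
      obtain ⟨m, -, hm⟩ := hirr i₀ i
      exact ⟨m, propagate_eq hpos w ζ hwrel m i₀ i hm⟩
    set C : Fin n → ZMod k := fun i => (((hreach i).choose : ℕ) : ZMod k) with hC
    have hCkey : ∀ (i : Fin n) (m : ℕ), w i = ζ ^ m * w i₀ → C i = (m : ZMod k) := by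
      intro i m hm
      have h1 := (hreach i).choose_spec
      have h2 : ζ ^ m = ζ ^ (hreach i).choose :=
        mul_right_cancel₀ (hwne i₀) (hm.symm.trans h1)
      show (((hreach i).choose : ℕ) : ZMod k) = (m : ZMod k)
      exact ((hζpow m (hreach i).choose).mp h2).symm
    refine ⟨C, ?_, ?_⟩
    · intro t
      set m := t.val with hm
      have hex : ∃ j, 0 < (P ^ m) i₀ j := by
        by_contra hc
        push_neg at hc
        have h1 : ∑ j, (P ^ m) i₀ j ≤ 0 := Finset.sum_nonpos fun j _ => hc j
        rw [pow_row hpos hrow m i₀] at h1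
        linarith
      obtain ⟨j, hj⟩ := hex
      refine ⟨j, ?_⟩
      rw [hCkey j m (propagate_eq hpos w ζ hwrel m i₀ j hj)]
      exact ZMod.natCast_rightInverse t
    · intro i j hij
      obtain ⟨mi, hmi⟩ := hreach i
      have h1 : w j = ζ ^ (mi + 1) * w i₀ := by
        rw [hwrel i j hij, hmi, pow_succ]; ring
      rw [hCkey j _ h1, hCkey i _ hmi]
      push_cast
      ring


end Stmt12Aux
end


/-- Frobenius.  Let `P` be an irreducible `n × n` stochastic matrix
(nonnegative entries, row sums one, and for all `i, j` some power `P^m`, `m ≥ 1`, has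
`(P^m)_{ij} > 0`).  Then there is a `k` with `1 ≤ k ≤ n` such that the set of complex
eigenvalues of `P` of modulus one (the modulus-one roots of the characteristic
polynomial of `P` over `ℂ`) is exactly the set of `k`-th roots of unity, each being a
simple root of the characteristic polynomial (root multiplicity one).  Moreover if
`k > 1` then the index set can be partitioned into `k` nonempty classes, labelled
cyclically by `ZMod k`, such that `p_{ij} > 0` and `i ∈ C_t` imply `j ∈ C_{t+1}`. -/
theorem stmt12 {n : ℕ} (hn : 0 < n) (P : Matrix (Fin n) (Fin n) ℝ)
    (hpos : ∀ i j, 0 ≤ P i j)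
    (hrow : ∀ i, ∑ j, P i j = 1)
    (hirr : ∀ i j, ∃ m : ℕ, 1 ≤ m ∧ 0 < (P ^ m) i j) :
    ∃ k : ℕ, 1 ≤ k ∧ k ≤ n ∧
      {lam : ℂ | ‖lam‖ = 1 ∧
          (P.map (fun r : ℝ => (r : ℂ))).charpoly.IsRoot lam}
        = {lam : ℂ | lam ^ k = 1} ∧
      (∀ lam : ℂ, lam ^ k = 1 →
        (P.map (fun r : ℝ => (r : ℂ))).charpoly.rootMultiplicity lam = 1) ∧
      (1 < k → ∃ C : Fin n → ZMod k,
        Function.Surjective C ∧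
        ∀ i j, 0 < P i j → C j = C i + 1) := by
  exact Stmt12Aux.stmt12' hn hpos hrow hirr
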